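/- Let λ = (λ_m)_{m≥1} be a nonincreasing sequence of nonnegative reals with λ_2 > 0, let 1 ≤ a_d ≤ d for each d ≥ 1, b_d = d − a_d, and set ∇_d = {k ∈ ℕ^d : k_1 ≤ … ≤ k_{a_d}} (symmetric setting). Define n(ε,d) = #{k ∈ ∇_d : ∏_{l=1}^d λ_{k_l} > ε²}. (i) If there exist C, p > 0, q ≥ 0 with n(ε,d) ≤ C·ε^{−p}·d^q (the counted set being finite) for all d ∈ ℕ, ε ∈ (0,1], and if λ_1 ≥ 1, then there is a constant c > 0 with b_d ≤ c·ln(d) for all d ≥ 2. (ii) If this bound holds with q = 0 (strong polynomial tractability) and λ_1 ≥ 1, then sup_d b_d < ∞ and λ_2 < 1/λ_1. -/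

import Mathlib

/-- Multi-indices in `ℕ^d` (entries `≥ 1`) that are nondecreasing along the first `a`
coordinates (the symmetric index set `∇_d`). -/
def symIdx (a d : ℕ) : Set (Fin d → ℕ) :=
  {k | (∀ i, 1 ≤ k i) ∧ ∀ i j : Fin d, i ≤ j → (j : ℕ) < a → k i ≤ k j}

open Finset

/-- index taking value 2 on `S` and 1 elsewhere -/
def indicIdx {d : ℕ} (S : Finset (Fin d)) : Fin d → ℕ := fun x => if x ∈ S then 2 else 1

lemma indicIdx_injective {d : ℕ} : Function.Injective (indicIdx (d := d)) := by
  intro S S' h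
  ext x
  have hx := congrFun h x
  unfold indicIdx at hx
  by_cases h1 : x ∈ S <;> by_cases h2 : x ∈ S' <;> simp [h1, h2] at hx ⊢

lemma indicIdx_mem_symIdx {d a : ℕ} (S : Finset (Fin d))
    (hS : ∀ i j : Fin d, i ≤ j → (j : ℕ) < a → i ∈ S → j ∈ S) :
    indicIdx S ∈ symIdx a d := by
  refine ⟨fun i => ?_, fun i j hij hja => ?_⟩
  · unfold indicIdx; split <;> omega
  · unfold indicIdx
    by_cases hi : i ∈ S
    · rw [if_pos hi, if_pos (hS i j hij hja hi)]
    · rw [if_neg hi]; split <;> omega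

lemma prod_indicIdx (Λ : ℕ → ℝ) {d : ℕ} (S : Finset (Fin d)) :
    ∏ x, Λ (indicIdx S x) = Λ 2 ^ S.card * Λ 1 ^ (d - S.card) := by
  unfold indicIdx
  have : ∀ x : Fin d, Λ (if x ∈ S then 2 else 1) = if x ∈ S then Λ 2 else Λ 1 := by
    intro x; split <;> rfl
  rw [Finset.prod_congr rfl (fun x _ => this x), Finset.prod_ite]
  rw [Finset.prod_const, Finset.prod_const, Finset.filter_univ_mem]
  congr 2
  have : Finset.filter (fun x => ¬ x ∈ S) Finset.univ = Sᶜ := by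
    ext x; simp
  rw [this, Finset.card_compl, Fintype.card_fin]

lemma mul_add_cancel' {s i i' r r' : ℕ} (hr : r < s) (hr' : r' < s)
    (h : i * s + r = i' * s + r') : i = i' ∧ r = r' := by
  rcases Nat.lt_trichotomy i i' with hlt | heq | hgt
  · exfalso
    have h2 : (i + 1) * s ≤ i' * s := Nat.mul_le_mul_right s (Nat.succ_le_of_lt hlt)
    rw [add_one_mul] at h2
    linarith
  · subst heq
    refine ⟨rfl, by linarith⟩
  · exfalso
    have h2 : (i' + 1) * s ≤ i * s := Nat.mul_le_mul_right s (Nat.succ_le_of_lt hgt)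
    rw [add_one_mul] at h2
    linarith

/-- Counting lemma: indices with `jj` twos spread over the non-symmetric coordinates. -/
lemma comb (Λ : ℕ → ℝ) (a d jj s : ℕ) (hs : 1 ≤ s) (hjs : a + jj * s ≤ d) (ε : ℝ)
    (hε : ε ^ 2 < Λ 2 ^ jj * Λ 1 ^ (d - jj))
    (hfin : {k : Fin d → ℕ | k ∈ symIdx a d ∧ ε ^ 2 < ∏ l, Λ (k l)}.Finite) :
    s ^ jj ≤ {k : Fin d → ℕ | k ∈ symIdx a d ∧ ε ^ 2 < ∏ l, Λ (k l)}.ncard := by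
  classical
  have hlt : ∀ (t : Fin jj → Fin s) (i : Fin jj), a + (i : ℕ) * s + (t i : ℕ) < d := by
    intro t i
    have h2 : ((i : ℕ) + 1) * s ≤ jj * s := Nat.mul_le_mul_right s i.2
    rw [add_one_mul] at h2
    have h3 : (t i : ℕ) < s := (t i).2
    linarith
  set g : (Fin jj → Fin s) → Fin jj → Fin d := fun t i => ⟨a + i * s + t i, hlt t i⟩ with hg
  have gval : ∀ t i, ((g t i : Fin d) : ℕ) = a + (i : ℕ) * s + (t i : ℕ) := fun t i => rfl
  have gkey : ∀ (t t' : Fin jj → Fin s) (i i' : Fin jj), g t i = g t' i' → i = i' ∧ t i = t' i' := by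
    intro t t' i i' h
    have hval : a + (i : ℕ) * s + (t i : ℕ) = a + (i' : ℕ) * s + (t' i' : ℕ) := by
      have := congrArg Fin.val h; simpa [gval] using this
    have hval2 : (i : ℕ) * s + (t i : ℕ) = (i' : ℕ) * s + (t' i' : ℕ) := by omega
    obtain ⟨h1, h2⟩ := mul_add_cancel' (t i).2 (t' i').2 hval2
    exact ⟨Fin.ext h1, Fin.ext h2⟩
  have ginj : ∀ t, Function.Injective (g t) := fun t i i' h => (gkey t t i i' h).1
  set Sf : (Fin jj → Fin s) → Finset (Fin d) := fun t => Finset.image (g t) Finset.univ with hSf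
  have hScard : ∀ t, (Sf t).card = jj := by
    intro t
    rw [hSf]; simp only
    rw [Finset.card_image_of_injective _ (ginj t), Finset.card_univ, Fintype.card_fin]
  have hSinj : Function.Injective Sf := by
    intro t t' h
    funext i
    have hmem : g t i ∈ Sf t' := by
      rw [← h, hSf]; simp only [Finset.mem_image]; exact ⟨i, Finset.mem_univ i, rfl⟩
    rw [hSf] at hmem; simp only [Finset.mem_image] at hmem
    obtain ⟨i', _, hi'⟩ := hmem
    obtain ⟨h1, h2⟩ := gkey t' t i' i hi'
    rw [← h2, h1]
  set φ : (Fin jj → Fin s) → (Fin d → ℕ) := fun t => indicIdx (Sf t) with hφ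
  have hφinj : Function.Injective φ := fun t t' h => hSinj (indicIdx_injective h)
  set T : Finset (Fin d → ℕ) := Finset.image φ Finset.univ with hT
  have hTcard : T.card = s ^ jj := by
    rw [hT, Finset.card_image_of_injective _ hφinj, Finset.card_univ, Fintype.card_fun,
      Fintype.card_fin, Fintype.card_fin]
  have hsub : (T : Set (Fin d → ℕ)) ⊆ {k : Fin d → ℕ | k ∈ symIdx a d ∧ ε ^ 2 < ∏ l, Λ (k l)} := by
    intro k hk
    simp only [hT, Finset.coe_image, Set.mem_image, Finset.coe_univ, Set.image_univ,
      Set.mem_range] at hk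
    obtain ⟨t, rfl⟩ := hk
    constructor
    · apply indicIdx_mem_symIdx
      intro i j hij hja hi
      exfalso
      rw [hSf] at hi; simp only [Finset.mem_image] at hi
      obtain ⟨i', _, hi'⟩ := hi
      have : a ≤ (i : ℕ) := by
        have := congrArg Fin.val hi'
        simp [gval] at this
        omega
      have hij' : (i : ℕ) ≤ (j : ℕ) := hij
      omega
    · show ε ^ 2 < ∏ l, Λ (φ t l)
      rw [hφ]; simp only
      rw [prod_indicIdx, hScard]
      exact hε
  calc s ^ jj = T.card := hTcard.symm
    _ = (T : Set (Fin d → ℕ)).ncard := (Set.ncard_coe_finset T).symm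
    _ ≤ _ := Set.ncard_le_ncard hsub hfin

lemma card_window (d a jj : ℕ) (hja : jj ≤ a) (had : a ≤ d) :
    (Finset.filter (fun x : Fin d => a - jj ≤ (x : ℕ) ∧ (x : ℕ) < a) Finset.univ).card = jj := by
  classical
  have himg : Finset.filter (fun x : Fin d => a - jj ≤ (x : ℕ) ∧ (x : ℕ) < a) Finset.univ
      = Finset.image (fun i : Fin jj => (⟨a - jj + i.1, by have := i.2; omega⟩ : Fin d))
          Finset.univ := by
    ext x
    simp only [Finset.mem_filter, Finset.mem_univ, true_and, Finset.mem_image]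
    constructor
    · rintro ⟨h1, h2⟩
      refine ⟨⟨x.1 - (a - jj), by omega⟩, ?_⟩
      apply Fin.ext; simp; omega
    · rintro ⟨i, rfl⟩
      have := i.2
      simp; omega
  rw [himg, Finset.card_image_of_injective, Finset.card_univ, Fintype.card_fin]
  intro i i' h
  have := congrArg Fin.val h
  simp at this
  exact Fin.ext (by omega)

/-- Counting lemma: the `J+1` indices with a block of twos at the top of the symmetric part. -/
lemma comb2 (Λ : ℕ → ℝ) (a d J : ℕ) (ha1 : 1 ≤ a) (hJa : J ≤ a) (had : a ≤ d) (ε : ℝ)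
    (hε : ∀ j ≤ J, ε ^ 2 < Λ 2 ^ j * Λ 1 ^ (d - j))
    (hfin : {k : Fin d → ℕ | k ∈ symIdx a d ∧ ε ^ 2 < ∏ l, Λ (k l)}.Finite) :
    J + 1 ≤ {k : Fin d → ℕ | k ∈ symIdx a d ∧ ε ^ 2 < ∏ l, Λ (k l)}.ncard := by
  classical
  set Sf : ℕ → Finset (Fin d) :=
    fun j => Finset.filter (fun x : Fin d => a - j ≤ (x : ℕ) ∧ (x : ℕ) < a) Finset.univ with hSf
  set H : ℕ → (Fin d → ℕ) := fun j => indicIdx (Sf j) with hH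
  have hScard : ∀ j ≤ J, (Sf j).card = j := fun j hj => card_window d a j (le_trans hj hJa) had
  have hinj : Set.InjOn H (Finset.range (J + 1) : Set ℕ) := by
    intro j hj j' hj' h
    simp only [Finset.coe_range, Set.mem_Iio] at hj hj'
    have : Sf j = Sf j' := indicIdx_injective h
    have h1 : (Sf j).card = j := hScard j (by omega)
    have h2 : (Sf j').card = j' := hScard j' (by omega)
    rw [this, h2] at h1; omega
  set T : Finset (Fin d → ℕ) := Finset.image H (Finset.range (J + 1)) with hT
  have hTcard : T.card = J + 1 := by
    rw [hT, Finset.card_image_of_injOn hinj, Finset.card_range]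
  have hsub : (T : Set (Fin d → ℕ)) ⊆ {k : Fin d → ℕ | k ∈ symIdx a d ∧ ε ^ 2 < ∏ l, Λ (k l)} := by
    intro k hk
    simp only [hT, Finset.coe_image, Set.mem_image, Finset.mem_coe, Finset.mem_range] at hk
    obtain ⟨j, hj, rfl⟩ := hk
    have hjJ : j ≤ J := by omega
    constructor
    · apply indicIdx_mem_symIdx
      intro i i' hii hia hi
      rw [hSf] at hi ⊢
      simp only [Finset.mem_filter, Finset.mem_univ, true_and] at hi ⊢
      have : (i : ℕ) ≤ (i' : ℕ) := hii
      omega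
    · show ε ^ 2 < ∏ l, Λ (H j l)
      rw [hH]; simp only
      rw [prod_indicIdx, hScard j hjJ]
      exact hε j hjJ
  calc J + 1 = T.card := hTcard.symm
    _ = (T : Set (Fin d → ℕ)).ncard := (Set.ncard_coe_finset T).symm
    _ ≤ _ := Set.ncard_le_ncard hsub hfin

lemma key_bound (Λ : ℕ → ℝ) (h2 : 0 < Λ 2) (h1 : 1 ≤ Λ 1) (a d : ℕ)
    (p : ℝ) (D : ℝ)
    (hPT : ∀ ε : ℝ, 0 < ε → ε ≤ 1 →
      {k : Fin d → ℕ | k ∈ symIdx a d ∧ ε ^ 2 < ∏ l, Λ (k l)}.Finite ∧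
      ({k : Fin d → ℕ | k ∈ symIdx a d ∧ ε ^ 2 < ∏ l, Λ (k l)}.ncard : ℝ) ≤ D * ε ^ (-p))
    (jj s : ℕ) (hs : 1 ≤ s) (hjs : a + jj * s ≤ d) :
    (s : ℝ) ^ jj ≤ D * ((2:ℝ) ^ p * ((min (Λ 2) 1) ^ (-p)) ^ (jj + 1)) := by
  set μ := min (Λ 2) 1 with hμdef
  have hμ0 : 0 < μ := lt_min h2 one_pos
  have hμ1 : μ ≤ 1 := min_le_right _ _
  set ε := μ ^ (jj + 1) / 2 with hεdef
  have hε0 : 0 < ε := by positivity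
  have hε1 : ε ≤ 1 := by
    have h := pow_le_one₀ hμ0.le hμ1 (n := jj + 1)
    rw [hεdef]; linarith
  have hε2 : ε ^ 2 < Λ 2 ^ jj * Λ 1 ^ (d - jj) := by
    have e1 : ε ^ 2 = μ ^ ((jj + 1) * 2) / 4 := by
      rw [hεdef, div_pow, pow_mul]; norm_num
    have e2 : μ ^ ((jj + 1) * 2) ≤ μ ^ jj := pow_le_pow_of_le_one hμ0.le hμ1 (by omega)
    have e3 : (0:ℝ) < μ ^ jj := pow_pos hμ0 _
    have e4 : μ ^ jj ≤ Λ 2 ^ jj := pow_le_pow_left₀ hμ0.le (min_le_left _ _) jj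
    have e5 : Λ 2 ^ jj ≤ Λ 2 ^ jj * Λ 1 ^ (d - jj) :=
      le_mul_of_one_le_right (pow_nonneg h2.le _) (one_le_pow₀ h1)
    calc ε ^ 2 = μ ^ ((jj + 1) * 2) / 4 := e1
      _ < μ ^ jj := by linarith
      _ ≤ _ := le_trans e4 e5
  obtain ⟨hfin, hcard⟩ := hPT ε hε0 hε1
  have hcomb := comb Λ a d jj s hs hjs ε hε2 hfin
  have hεp : ε ^ (-p) = (2:ℝ) ^ p * (μ ^ (-p)) ^ (jj + 1) := by
    rw [hεdef, Real.div_rpow (by positivity) (by norm_num)]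
    rw [div_eq_mul_inv, Real.rpow_neg (by norm_num : (0:ℝ) ≤ 2), inv_inv]
    rw [← Real.rpow_natCast μ (jj + 1), ← Real.rpow_mul hμ0.le,
      mul_comm (((jj + 1 : ℕ) : ℝ)) (-p), Real.rpow_mul hμ0.le, Real.rpow_natCast]
    ring
  have hchain : (s:ℝ) ^ jj ≤ D * ε ^ (-p) := by
    calc (s:ℝ) ^ jj = ((s ^ jj : ℕ) : ℝ) := by push_cast; ring
      _ ≤ _ := le_trans (Nat.cast_le.mpr hcomb) hcard
  rw [hεp] at hchain
  exact hchain

lemma key_bound2 (Λ : ℕ → ℝ) (h2 : 0 < Λ 2) (h1 : 1 ≤ Λ 1) (a d : ℕ) (had : a ≤ d)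
    (p : ℝ) (D : ℝ)
    (hPT : ∀ ε : ℝ, 0 < ε → ε ≤ 1 →
      {k : Fin d → ℕ | k ∈ symIdx a d ∧ ε ^ 2 < ∏ l, Λ (k l)}.Finite ∧
      ({k : Fin d → ℕ | k ∈ symIdx a d ∧ ε ^ 2 < ∏ l, Λ (k l)}.ncard : ℝ) ≤ D * ε ^ (-p))
    (N : ℕ) (hN1 : 1 ≤ N) (hNR : (min (Λ 2) 1) ^ (-p) ≤ (N : ℝ))
    (jj : ℕ) (hjj1 : 1 ≤ jj) (hjle : 2 * N * jj ≤ d - a) :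
    (2:ℝ) ^ jj ≤ D * (2:ℝ) ^ p * (min (Λ 2) 1) ^ (-p) := by
  set μ := min (Λ 2) 1 with hμdef
  have hμ0 : 0 < μ := lt_min h2 one_pos
  set R := μ ^ (-p) with hRdef
  have hR0 : 0 < R := Real.rpow_pos_of_pos hμ0 _
  set s := (d - a) / jj with hsdef
  have hs2N : 2 * N ≤ s := (Nat.le_div_iff_mul_le (by omega)).mpr hjle
  have hs1 : 1 ≤ s := le_trans (by omega) hs2N
  have hjs : a + jj * s ≤ d := by
    have h5 : jj * s ≤ d - a := by
      rw [hsdef, Nat.mul_comm]; exact Nat.div_mul_le_self _ _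
    calc a + jj * s ≤ a + (d - a) := Nat.add_le_add_left h5 a
      _ = d := by omega
  have hkb := key_bound Λ h2 h1 a d p D hPT jj s hs1 hjs
  have hlhs : ((2:ℝ) * R) ^ jj ≤ (s:ℝ) ^ jj := by
    apply pow_le_pow_left₀ (by positivity)
    have hc : ((2 * N : ℕ) : ℝ) ≤ (s : ℝ) := Nat.cast_le.mpr hs2N
    push_cast at hc
    linarith [hNR]
  rw [mul_pow] at hlhs
  have hrw : D * ((2:ℝ) ^ p * R ^ (jj + 1)) = (D * (2:ℝ) ^ p * R) * R ^ jj := by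
    rw [pow_succ]; ring
  rw [hrw] at hkb
  exact le_of_mul_le_mul_right (le_trans hlhs hkb) (pow_pos hR0 jj)


set_option maxHeartbeats 1000000 in
/-- Necessary conditions for (strong) polynomial tractability of symmetric tensor
product problems with respect to the absolute error criterion, in the case `λ₁ ≥ 1`:
polynomial tractability forces `b_d = O(ln d)`, and strong polynomial tractability
forces `b_d = O(1)` and `λ₂ < 1/λ₁`.  Here `b_d = d - a_d`. -/
theorem stmt_4
    (Λ : ℕ → ℝ) (hnn : ∀ m, 0 ≤ Λ m)
    (hmono : ∀ m n : ℕ, 1 ≤ m → m ≤ n → Λ n ≤ Λ m) (h2 : 0 < Λ 2)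
    (a : ℕ → ℕ) (ha : ∀ d : ℕ, 1 ≤ d → 1 ≤ a d ∧ a d ≤ d) :
    -- (i) polynomial tractability and λ₁ ≥ 1 imply b_d = O(ln d)
    (∀ C p q : ℝ, 0 < C → 0 < p → 0 ≤ q →
      (∀ d : ℕ, 1 ≤ d → ∀ ε : ℝ, 0 < ε → ε ≤ 1 →
        {k : Fin d → ℕ | k ∈ symIdx (a d) d ∧ ε ^ 2 < ∏ l, Λ (k l)}.Finite ∧
        ({k : Fin d → ℕ | k ∈ symIdx (a d) d ∧ ε ^ 2 < ∏ l, Λ (k l)}.ncard : ℝ) ≤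
          C * ε ^ (-p) * (d : ℝ) ^ q) →
      1 ≤ Λ 1 →
      ∃ c : ℝ, 0 < c ∧ ∀ d : ℕ, 2 ≤ d → ((d - a d : ℕ) : ℝ) ≤ c * Real.log d) ∧
    -- (ii) strong polynomial tractability and λ₁ ≥ 1 imply b_d = O(1) and λ₂ < 1/λ₁
    (∀ C p : ℝ, 0 < C → 0 < p →
      (∀ d : ℕ, 1 ≤ d → ∀ ε : ℝ, 0 < ε → ε ≤ 1 →
        {k : Fin d → ℕ | k ∈ symIdx (a d) d ∧ ε ^ 2 < ∏ l, Λ (k l)}.Finite ∧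
        ({k : Fin d → ℕ | k ∈ symIdx (a d) d ∧ ε ^ 2 < ∏ l, Λ (k l)}.ncard : ℝ) ≤
          C * ε ^ (-p)) →
      1 ≤ Λ 1 →
      (∃ B : ℕ, ∀ d : ℕ, 1 ≤ d → d - a d ≤ B) ∧ Λ 2 < 1 / Λ 1) := by
  constructor
  · -- (i)
    intro C p q hC hp hq hPT h1
    set μ := min (Λ 2) 1 with hμdef
    have hμ0 : 0 < μ := lt_min h2 one_pos
    have hμ1 : μ ≤ 1 := min_le_right _ _
    set R := μ ^ (-p) with hRdef
    have hR1 : (1:ℝ) ≤ R := by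
      have h := Real.rpow_le_rpow_of_exponent_ge hμ0 hμ1 (show -p ≤ (0:ℝ) by linarith)
      rwa [Real.rpow_zero] at h
    have hR0 : (0:ℝ) < R := by linarith
    set N := Nat.ceil R with hNdef
    have hN1 : 1 ≤ N := Nat.one_le_ceil_iff.mpr hR0
    have hNR : R ≤ (N:ℝ) := Nat.le_ceil R
    have hNr : (1:ℝ) ≤ (N:ℝ) := by exact_mod_cast hN1
    have hN0' : (0:ℝ) ≤ (N:ℝ) := by linarith
    have hlog2 : 0 < Real.log 2 := Real.log_pos (by norm_num)
    set K := Real.log (C * (2:ℝ) ^ p * R) with hKdef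
    set M := max K 0 with hMdef
    have hM0 : 0 ≤ M := le_max_right _ _
    have hKM : K ≤ M := le_max_left _ _
    refine ⟨(4 * (N:ℝ)) * (M + (q + 1) * Real.log 2) / (Real.log 2) ^ 2, ?_, ?_⟩
    · apply div_pos
      · apply mul_pos (by linarith)
        nlinarith
      · positivity
    intro d hd2
    have hd1 : 1 ≤ d := by omega
    have had : a d ≤ d := (ha d hd1).2
    have hdpos : (0:ℝ) < (d:ℝ) := by exact_mod_cast hd1
    have hld : Real.log 2 ≤ Real.log d :=
      Real.log_le_log (by norm_num) (by exact_mod_cast hd2)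
    have hld0 : (0:ℝ) ≤ Real.log d := le_trans hlog2.le hld
    obtain ⟨b, hbdef⟩ : ∃ b, b = d - a d := ⟨_, rfl⟩
    obtain ⟨jj, hjjdef⟩ : ∃ jj, jj = b / (2 * N) := ⟨_, rfl⟩
    rw [div_mul_eq_mul_div, le_div_iff₀ (by positivity), ← hbdef]
    by_cases hjj : jj = 0
    · have hb2N : b < 2 * N := by
        by_contra hcon
        push_neg at hcon
        have : 1 ≤ jj := by
          rw [hjjdef]
          exact (Nat.le_div_iff_mul_le (by omega)).mpr (by omega)
        omega
      have hbcast : (b:ℝ) ≤ 2 * (N:ℝ) := by exact_mod_cast hb2N.le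
      have fact0 : (b:ℝ) * Real.log 2 ^ 2 ≤ 2 * (N:ℝ) * Real.log 2 ^ 2 :=
        mul_le_mul_of_nonneg_right hbcast (by positivity)
      have factA : (0:ℝ) ≤ (N:ℝ) * (M * Real.log d) :=
        mul_nonneg hN0' (mul_nonneg hM0 hld0)
      have factC : (0:ℝ) ≤ (N:ℝ) * (q * (Real.log d * Real.log 2)) :=
        mul_nonneg hN0' (mul_nonneg hq (mul_nonneg hld0 hlog2.le))
      have factD : (0:ℝ) ≤ (N:ℝ) * (Real.log 2 * (Real.log d - Real.log 2)) :=
        mul_nonneg hN0' (mul_nonneg hlog2.le (sub_nonneg.mpr hld))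
      nlinarith [fact0, factA, factC, factD]
    · have hjj1 : 1 ≤ jj := by omega
      have hjle : 2 * N * jj ≤ b := by
        calc 2 * N * jj = jj * (2 * N) := Nat.mul_comm _ _
          _ ≤ b := by rw [hjjdef]; exact Nat.div_mul_le_self _ _
      have hjleb : 2 * N * jj ≤ d - a d := by omega
      have hPTd' : ∀ ε : ℝ, 0 < ε → ε ≤ 1 →
          {k : Fin d → ℕ | k ∈ symIdx (a d) d ∧ ε ^ 2 < ∏ l, Λ (k l)}.Finite ∧
          ({k : Fin d → ℕ | k ∈ symIdx (a d) d ∧ ε ^ 2 < ∏ l, Λ (k l)}.ncard : ℝ) ≤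
            (C * (d:ℝ) ^ q) * ε ^ (-p) := by
        intro ε hε0 hε1
        obtain ⟨hf, hc⟩ := hPT d hd1 ε hε0 hε1
        refine ⟨hf, ?_⟩
        calc _ ≤ C * ε ^ (-p) * (d:ℝ) ^ q := hc
          _ = (C * (d:ℝ) ^ q) * ε ^ (-p) := by ring
      have hkb2 := key_bound2 Λ h2 h1 (a d) d had p _ hPTd' N hN1 hNR jj hjj1 hjleb
      have hCpos : (0:ℝ) < C * (2:ℝ) ^ p * R := by positivity
      have heq : C * (d:ℝ) ^ q * (2:ℝ) ^ p * (min (Λ 2) 1) ^ (-p)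
          = (C * (2:ℝ) ^ p * R) * (d:ℝ) ^ q := by
        rw [hRdef, hμdef]; ring
      have hlog : (jj:ℝ) * Real.log 2 ≤ K + q * Real.log d := by
        have h0 : (0:ℝ) < (2:ℝ) ^ (jj:ℕ) := by positivity
        have hle := Real.log_le_log h0 (le_of_le_of_eq hkb2 heq)
        rw [Real.log_pow, Real.log_mul (ne_of_gt hCpos)
          (ne_of_gt (Real.rpow_pos_of_pos hdpos q)), Real.log_rpow hdpos, ← hKdef] at hle
        exact hle
      have hblt : b < (jj + 1) * (2 * N) :=
        (Nat.div_lt_iff_lt_mul (by omega)).mp (by omega)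
      have hbR : (b:ℝ) ≤ 2 * (N:ℝ) * (jj:ℝ) + 2 * (N:ℝ) := by
        have : (b:ℝ) < ((jj:ℝ) + 1) * (2 * (N:ℝ)) := by exact_mod_cast hblt
        linarith
      have hlog' : (jj:ℝ) * Real.log 2 ≤ M + q * Real.log d := by linarith
      have fact1 : (b:ℝ) * Real.log 2 ≤ (2 * (N:ℝ) * (jj:ℝ) + 2 * (N:ℝ)) * Real.log 2 :=
        mul_le_mul_of_nonneg_right hbR hlog2.le
      have fact2 : 2 * (N:ℝ) * ((jj:ℝ) * Real.log 2) ≤ 2 * (N:ℝ) * (M + q * Real.log d) :=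
        mul_le_mul_of_nonneg_left hlog' (by linarith)
      have step1 : (b:ℝ) * Real.log 2 ≤ 2 * (N:ℝ) * (M + q * Real.log d) + 2 * (N:ℝ) * Real.log 2 := by
        nlinarith [fact1, fact2]
      have fact3 : ((b:ℝ) * Real.log 2) * Real.log 2 ≤
          (2 * (N:ℝ) * (M + q * Real.log d) + 2 * (N:ℝ) * Real.log 2) * Real.log 2 :=
        mul_le_mul_of_nonneg_right step1 hlog2.le
      have factA : (0:ℝ) ≤ (N:ℝ) * (M * (Real.log d - Real.log 2)) :=
        mul_nonneg hN0' (mul_nonneg hM0 (sub_nonneg.mpr hld))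
      have factB : (0:ℝ) ≤ (N:ℝ) * (M * Real.log 2) :=
        mul_nonneg hN0' (mul_nonneg hM0 hlog2.le)
      have factC : (0:ℝ) ≤ (N:ℝ) * (q * (Real.log d * Real.log 2)) :=
        mul_nonneg hN0' (mul_nonneg hq (mul_nonneg hld0 hlog2.le))
      have factD : (0:ℝ) ≤ (N:ℝ) * (Real.log 2 * (Real.log d - Real.log 2)) :=
        mul_nonneg hN0' (mul_nonneg hlog2.le (sub_nonneg.mpr hld))
      nlinarith [fact3, factA, factB, factC, factD]
  · -- (ii)
    intro C p hC hp hPT h1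
    set μ := min (Λ 2) 1 with hμdef
    have hμ0 : 0 < μ := lt_min h2 one_pos
    have hμ1 : μ ≤ 1 := min_le_right _ _
    set R := μ ^ (-p) with hRdef
    have hR1 : (1:ℝ) ≤ R := by
      have h := Real.rpow_le_rpow_of_exponent_ge hμ0 hμ1 (show -p ≤ (0:ℝ) by linarith)
      rwa [Real.rpow_zero] at h
    have hR0 : (0:ℝ) < R := by linarith
    set N := Nat.ceil R with hNdef
    have hN1 : 1 ≤ N := Nat.one_le_ceil_iff.mpr hR0
    have hNR : R ≤ (N:ℝ) := Nat.le_ceil R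
    set K' := Nat.ceil (C * (2:ℝ) ^ p * R) with hK'def
    obtain ⟨B, hBdef⟩ : ∃ B, B = (K' + 1) * (2 * N) := ⟨_, rfl⟩
    have hB2N : 2 * N ≤ B := by
      rw [hBdef]
      calc 2 * N = 1 * (2 * N) := (one_mul _).symm
        _ ≤ (K' + 1) * (2 * N) := Nat.mul_le_mul_right _ (by omega)
    have hB : ∀ d : ℕ, 1 ≤ d → d - a d ≤ B := by
      intro d hd1
      have had : a d ≤ d := (ha d hd1).2
      obtain ⟨b, hbdef⟩ : ∃ b, b = d - a d := ⟨_, rfl⟩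
      obtain ⟨jj, hjjdef⟩ : ∃ jj, jj = b / (2 * N) := ⟨_, rfl⟩
      rw [← hbdef]
      by_cases hjj : jj = 0
      · have hb2N : b < 2 * N := by
          by_contra hcon
          push_neg at hcon
          have : 1 ≤ jj := by
            rw [hjjdef]
            exact (Nat.le_div_iff_mul_le (by omega)).mpr (by omega)
          omega
        exact le_of_lt (lt_of_lt_of_le hb2N hB2N)
      · have hjj1 : 1 ≤ jj := by omega
        have hjle : 2 * N * jj ≤ b := by
          calc 2 * N * jj = jj * (2 * N) := Nat.mul_comm _ _
            _ ≤ b := by rw [hjjdef]; exact Nat.div_mul_le_self _ _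
        have hjleb : 2 * N * jj ≤ d - a d := by omega
        have hkb2 := key_bound2 Λ h2 h1 (a d) d had p C (hPT d hd1) N hN1 hNR jj hjj1 hjleb
        have hjlt : (jj:ℝ) < (2:ℝ) ^ jj := by exact_mod_cast (Nat.lt_two_pow_self (n := jj))
        have hkb2' : (2:ℝ) ^ jj ≤ C * (2:ℝ) ^ p * R := by
          rw [hRdef, hμdef]; exact hkb2
        have hjK : (jj:ℝ) ≤ (K':ℝ) := by
          rw [hK'def]
          exact le_trans (le_of_lt (lt_of_lt_of_le hjlt hkb2')) (Nat.le_ceil _)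
        have hjjK : jj ≤ K' := by exact_mod_cast hjK
        have hblt : b < (jj + 1) * (2 * N) :=
          (Nat.div_lt_iff_lt_mul (by omega)).mp (by omega)
        have hle : (jj + 1) * (2 * N) ≤ (K' + 1) * (2 * N) :=
          Nat.mul_le_mul_right _ (by omega)
        exact le_of_lt (lt_of_lt_of_le hblt (le_of_le_of_eq hle hBdef.symm))
    refine ⟨⟨B, hB⟩, ?_⟩
    by_contra hcon
    have h12 : 1 ≤ Λ 2 * Λ 1 := by
      have hΛ1 : 0 < Λ 1 := lt_of_lt_of_le one_pos h1
      have := not_lt.mp hcon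
      exact (div_le_iff₀ hΛ1).mp this
    obtain ⟨M', hM'def⟩ : ∃ M', M' = Nat.ceil (C * (2:ℝ) ^ p) := ⟨_, rfl⟩
    obtain ⟨J, hJdef⟩ : ∃ J, J = B + M' + 1 := ⟨_, rfl⟩
    obtain ⟨d, hddef⟩ : ∃ d, d = 2 * J := ⟨_, rfl⟩
    have hd1 : 1 ≤ d := by omega
    obtain ⟨ha1, had⟩ := ha d hd1
    have hJa : J ≤ a d := by
      have := hB d hd1
      omega
    have hεprod : ∀ j, j ≤ J → ((1:ℝ)/2) ^ 2 < Λ 2 ^ j * Λ 1 ^ (d - j) := by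
      intro j hj
      have hdj : j ≤ d - j := by omega
      have e1 : Λ 1 ^ j ≤ Λ 1 ^ (d - j) := pow_le_pow_right₀ h1 hdj
      have e2 : (1:ℝ) ≤ (Λ 2 * Λ 1) ^ j := one_le_pow₀ h12
      rw [mul_pow] at e2
      have e3 : Λ 2 ^ j * Λ 1 ^ j ≤ Λ 2 ^ j * Λ 1 ^ (d - j) :=
        mul_le_mul_of_nonneg_left e1 (pow_nonneg h2.le _)
      nlinarith
    obtain ⟨hfin, hcard⟩ := hPT d hd1 (1/2) (by norm_num) (by norm_num)
    have hcomb2 := comb2 Λ (a d) d J ha1 hJa had (1/2) hεprod hfin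
    have hhalf : ((1:ℝ)/2) ^ (-p) = (2:ℝ) ^ p := by
      rw [one_div, Real.inv_rpow (by norm_num : (0:ℝ) ≤ 2),
        Real.rpow_neg (by norm_num : (0:ℝ) ≤ 2), inv_inv]
    have hM' : C * (2:ℝ) ^ p ≤ (M' : ℝ) := by rw [hM'def]; exact Nat.le_ceil _
    have hJM : ((J + 1 : ℕ):ℝ) ≤ (M' : ℝ) := by
      have h5 : ((J + 1 : ℕ):ℝ) ≤ C * ((1:ℝ)/2) ^ (-p) :=
        le_trans (Nat.cast_le.mpr hcomb2) hcard
      rw [hhalf] at h5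
      linarith
    have hfin2 : J + 1 ≤ M' := by exact_mod_cast hJM
    have hlt : M' < J + 1 := by
      rw [hJdef]
      exact Nat.lt_succ_of_le (Nat.le_succ_of_le (Nat.le_add_left M' B))
    exact Nat.lt_irrefl M' (lt_of_lt_of_le hlt hfin2)
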